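/- For every n ≥ 0 and all x, y ∈ ℝ^d, K_n(dν; x, y) = K_n(dμ; x, y) − 𝕂_n(ξ,x)^T (I_N + Λ 𝐊_n)^{−1} Λ 𝕂_n(ξ,y). -/

import Mathlib

open MeasureTheory MvPolynomial Matrix Finset

noncomputable section

/-- The space `Π_n^d` of real polynomials in `d` variables of total degree `≤ n`. -/
def piDeg (d n : ℕ) : Submodule ℝ (MvPolynomial (Fin d) ℝ) :=
  MvPolynomial.restrictTotalDegree (Fin d) ℝ n

/-- The inner product `⟨p, q⟩_μ = ∫ p q dμ`. -/
def muInner {d : ℕ} (μ : Measure (Fin d → ℝ)) (p q : MvPolynomial (Fin d) ℝ) : ℝ :=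
  ∫ x, eval x p * eval x q ∂μ

/-- The inner product `⟨p, q⟩_ν = ⟨p, q⟩_μ + 𝐩(ξ)^T Λ 𝐪(ξ)`. -/
def nuInner {d N : ℕ} (μ : Measure (Fin d → ℝ)) (ξ : Fin N → (Fin d → ℝ))
    (Λ : Matrix (Fin N) (Fin N) ℝ) (p q : MvPolynomial (Fin d) ℝ) : ℝ :=
  muInner μ p q + (fun i => eval (ξ i) p) ⬝ᵥ Λ.mulVec (fun i => eval (ξ i) q)

/-- The matrix `𝐊_n = (K_n(dμ; ξ_i, ξ_j))_{i,j=1}^N` built from a kernel `K`. -/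
def bigKmat {d N : ℕ} (ξ : Fin N → (Fin d → ℝ))
    (K : ℕ → (Fin d → ℝ) → MvPolynomial (Fin d) ℝ) (n : ℕ) :
    Matrix (Fin N) (Fin N) ℝ :=
  Matrix.of fun i j => eval (ξ j) (K n (ξ i))

/-- The column vector `𝕂_n(ξ, x) = (K_n(dμ; ξ_1, x), …, K_n(dμ; ξ_N, x))^T`. -/
def vecKmat {d N : ℕ} (ξ : Fin N → (Fin d → ℝ))
    (K : ℕ → (Fin d → ℝ) → MvPolynomial (Fin d) ℝ) (n : ℕ) (x : Fin d → ℝ) :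
    Fin N → ℝ :=
  fun i => eval x (K n (ξ i))

/- Auxiliary lemmas about `muInner`. -/
section Aux

variable {d : ℕ} {μ : Measure (Fin d → ℝ)}

lemma muInner_comm (p q : MvPolynomial (Fin d) ℝ) : muInner μ p q = muInner μ q p := by
  simp [muInner, mul_comm]

lemma muInner_sub_left
    (hint : ∀ p q : MvPolynomial (Fin d) ℝ, Integrable (fun x => eval x p * eval x q) μ)
    (p r q : MvPolynomial (Fin d) ℝ) :
    muInner μ (p - r) q = muInner μ p q - muInner μ r q := by
  simp only [muInner, map_sub, sub_mul]
  exact integral_sub (hint p q) (hint r q)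

lemma muInner_smul_left (c : ℝ) (p q : MvPolynomial (Fin d) ℝ) :
    muInner μ (c • p) q = c * muInner μ p q := by
  simp only [muInner, smul_eval, mul_assoc]
  exact integral_const_mul c _

lemma muInner_sum_left
    (hint : ∀ p q : MvPolynomial (Fin d) ℝ, Integrable (fun x => eval x p * eval x q) μ)
    {ι : Type*} (s : Finset ι) (f : ι → MvPolynomial (Fin d) ℝ) (q : MvPolynomial (Fin d) ℝ) :
    muInner μ (∑ i ∈ s, f i) q = ∑ i ∈ s, muInner μ (f i) q := by
  simp only [muInner, map_sum, Finset.sum_mul]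
  exact integral_finset_sum s fun i _ => hint (f i) q

lemma muInner_self_nonneg (p : MvPolynomial (Fin d) ℝ) : 0 ≤ muInner μ p p :=
  integral_nonneg fun x => mul_self_nonneg _

end Aux

/-- For every `n ≥ 0` and all `x, y ∈ ℝ^d`,
`K_n(dν; x, y) = K_n(dμ; x, y) − 𝕂_n(ξ,x)^T (I_N + Λ 𝐊_n)^{−1} Λ 𝕂_n(ξ,y)`. -/
theorem Kn_nu_formula
    {d N : ℕ} (hd : 1 ≤ d) (hN : 1 ≤ N)
    (μ : Measure (Fin d → ℝ))
    (hint : ∀ p q : MvPolynomial (Fin d) ℝ,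
      Integrable (fun x => eval x p * eval x q) μ)
    (hpos : ∀ p : MvPolynomial (Fin d) ℝ, p ≠ 0 → 0 < ∫ x, (eval x p) ^ 2 ∂μ)
    (ξ : Fin N → (Fin d → ℝ)) (hξ : Function.Injective ξ)
    (Λ : Matrix (Fin N) (Fin N) ℝ) (hΛ : Λ.PosDef)
    (Kmu : ℕ → (Fin d → ℝ) → MvPolynomial (Fin d) ℝ)
    (hKmuMem : ∀ n x, Kmu n x ∈ piDeg d n)
    (hKmuRep : ∀ n x, ∀ p ∈ piDeg d n, muInner μ (Kmu n x) p = eval x p)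
    (Knu : ℕ → (Fin d → ℝ) → MvPolynomial (Fin d) ℝ)
    (hKnuMem : ∀ n x, Knu n x ∈ piDeg d n)
    (hKnuRep : ∀ n x, ∀ p ∈ piDeg d n, nuInner μ ξ Λ (Knu n x) p = eval x p)
    (n : ℕ) (x y : Fin d → ℝ) :
    eval y (Knu n x) =
      eval y (Kmu n x) -
        vecKmat ξ Kmu n x ⬝ᵥ
          ((1 + Λ * bigKmat ξ Kmu n)⁻¹ * Λ).mulVec (vecKmat ξ Kmu n y) := by
  classical
  set K : Matrix (Fin N) (Fin N) ℝ := bigKmat ξ Kmu n with hKdef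
  set M : Matrix (Fin N) (Fin N) ℝ := 1 + Λ * K with hMdef
  -- symmetry of the kernel
  have hsym : ∀ z w : Fin d → ℝ, eval w (Kmu n z) = eval z (Kmu n w) := by
    intro z w
    rw [← hKmuRep n z (Kmu n w) (hKmuMem n w), muInner_comm,
      hKmuRep n w (Kmu n z) (hKmuMem n z)]
  have hKsym : Kᵀ = K := by
    ext i j
    simp only [hKdef, Matrix.transpose_apply, bigKmat, Matrix.of_apply]
    exact hsym (ξ j) (ξ i)
  have hΛsym : Λᵀ = Λ := by
    ext i j
    have h := congrFun (congrFun hΛ.1 i) j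
    simpa [Matrix.conjTranspose_apply] using h

  -- K is positive semidefinite
  have hKpsd : ∀ v : Fin N → ℝ, 0 ≤ v ⬝ᵥ K.mulVec v := by
    intro v
    set q : MvPolynomial (Fin d) ℝ := ∑ i, v i • Kmu n (ξ i) with hqdef
    have hqmem : q ∈ piDeg d n :=
      Submodule.sum_mem _ fun i _ => Submodule.smul_mem _ _ (hKmuMem n (ξ i))
    have h1 : muInner μ q q = v ⬝ᵥ K.mulVec v := by
      rw [hqdef, muInner_sum_left hint]
      show _ = ∑ i, v i * (K.mulVec v) i
      refine Finset.sum_congr rfl fun i _ => ?_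
      rw [muInner_smul_left, hKmuRep n (ξ i) q hqmem]
      congr 1
      show eval (ξ i) q = ∑ j, K i j * v j
      rw [hqdef, map_sum]
      refine Finset.sum_congr rfl fun j _ => ?_
      rw [smul_eval, hsym (ξ j) (ξ i), mul_comm]
      rfl
    rw [← h1]
    exact muInner_self_nonneg q
  -- M = 1 + Λ K is invertible
  have hΛdet : IsUnit Λ.det := hΛ.det_pos.ne'.isUnit
  have hker : ∀ v : Fin N → ℝ, M.mulVec v = 0 → v = 0 := by
    intro v hv
    by_contra hvne
    have h2 : v = -(Λ.mulVec (K.mulVec v)) := by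
      rw [hMdef, Matrix.add_mulVec, Matrix.one_mulVec, ← Matrix.mulVec_mulVec] at hv
      exact eq_neg_of_add_eq_zero_left hv
    have h1 : Λ⁻¹.mulVec v = -(K.mulVec v) := by
      calc Λ⁻¹.mulVec v = Λ⁻¹.mulVec (-(Λ.mulVec (K.mulVec v))) := by rw [← h2]
        _ = -(Λ⁻¹.mulVec (Λ.mulVec (K.mulVec v))) := by rw [Matrix.mulVec_neg]
        _ = -(K.mulVec v) := by
            rw [Matrix.mulVec_mulVec, Matrix.nonsing_inv_mul _ hΛdet, Matrix.one_mulVec]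
    have hpos' : 0 < v ⬝ᵥ Λ⁻¹.mulVec v := by
      have h := hΛ.inv.dotProduct_mulVec_pos hvne
      simpa using h
    rw [h1, dotProduct_neg] at hpos'
    linarith [hKpsd v]
  have hMunit : IsUnit M := by
    rw [← Matrix.mulVec_injective_iff_isUnit]
    intro u w huw
    have h0 : M.mulVec (u - w) = 0 := by rw [Matrix.mulVec_sub, huw, sub_self]
    exact sub_eq_zero.mp (hker _ h0)
  have hMdet : IsUnit M.det := (Matrix.isUnit_iff_isUnit_det M).mp hMunit
  -- the candidate kernel G
  set a : Fin N → ℝ := (M⁻¹ * Λ).mulVec (vecKmat ξ Kmu n x) with hadef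
  have hMa : M.mulVec a = Λ.mulVec (vecKmat ξ Kmu n x) := by
    rw [hadef, Matrix.mulVec_mulVec, ← Matrix.mul_assoc,
      Matrix.mul_nonsing_inv _ hMdet, Matrix.one_mul]
  set G : MvPolynomial (Fin d) ℝ := Kmu n x - ∑ i, a i • Kmu n (ξ i) with hGdef
  have hGmem : G ∈ piDeg d n :=
    Submodule.sub_mem _ (hKmuMem n x)
      (Submodule.sum_mem _ fun i _ => Submodule.smul_mem _ _ (hKmuMem n (ξ i)))
  have hGeval : ∀ w, eval w G = eval w (Kmu n x) - ∑ i, a i * eval w (Kmu n (ξ i)) := by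
    intro w
    rw [hGdef, map_sub, map_sum]
    simp only [smul_eval]
  have hGxi : ∀ j, eval (ξ j) G = vecKmat ξ Kmu n x j - (K.mulVec a) j := by
    intro j
    rw [hGeval]
    congr 1
    · exact hsym x (ξ j)
    · show _ = ∑ i, K j i * a i
      refine Finset.sum_congr rfl fun i _ => ?_
      rw [hsym (ξ i) (ξ j), mul_comm]
      rfl
  have hGmu : ∀ p ∈ piDeg d n,
      muInner μ G p = eval x p - a ⬝ᵥ (fun i => eval (ξ i) p) := by
    intro p hp
    rw [hGdef, muInner_sub_left hint, hKmuRep n x p hp, muInner_sum_left hint]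
    congr 1
    show _ = ∑ i, a i * eval (ξ i) p
    refine Finset.sum_congr rfl fun i _ => ?_
    rw [muInner_smul_left, hKmuRep n (ξ i) p hp]
  -- G reproduces for nuInner
  have hGrep : ∀ p ∈ piDeg d n, nuInner μ ξ Λ G p = eval x p := by
    intro p hp
    have hvec : (fun j => eval (ξ j) G) = vecKmat ξ Kmu n x - K.mulVec a := by
      funext j
      rw [hGxi j]
      rfl
    have hΛa : Λ.mulVec (vecKmat ξ Kmu n x - K.mulVec a) = a := by
      have h1 : Λ.mulVec (vecKmat ξ Kmu n x) = a + (Λ * K).mulVec a := by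
        rw [← hMa, hMdef, Matrix.add_mulVec, Matrix.one_mulVec]
      rw [Matrix.mulVec_sub, h1, ← Matrix.mulVec_mulVec]
      abel
    have hswap : ∀ v : Fin N → ℝ,
        v ⬝ᵥ Λ.mulVec (fun i => eval (ξ i) p) = Λ.mulVec v ⬝ᵥ (fun i => eval (ξ i) p) := by
      intro v
      rw [Matrix.dotProduct_mulVec, ← hΛsym, Matrix.vecMul_transpose, hΛsym]
    unfold nuInner
    rw [hGmu p hp, hvec, hswap, hΛa]
    ring
  -- uniqueness: Knu n x = G
  have hnu_sub : ∀ p r s : MvPolynomial (Fin d) ℝ,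
      nuInner μ ξ Λ (p - r) s = nuInner μ ξ Λ p s - nuInner μ ξ Λ r s := by
    intro p r s
    unfold nuInner
    rw [muInner_sub_left hint]
    have h : (fun i => eval (ξ i) (p - r))
        = (fun i => eval (ξ i) p) - (fun i => eval (ξ i) r) := by
      funext i
      simp [map_sub]
    rw [h, sub_dotProduct]
    ring
  set q : MvPolynomial (Fin d) ℝ := Knu n x - G with hqdef
  have hqmem : q ∈ piDeg d n := Submodule.sub_mem _ (hKnuMem n x) hGmem
  have hq0 : nuInner μ ξ Λ q q = 0 := by
    rw [hqdef, hnu_sub, hKnuRep n x q hqmem, hGrep q hqmem, sub_self]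
  have hqzero : q = 0 := by
    by_contra hne
    have h1 : 0 < muInner μ q q := by
      have h := hpos q hne
      simpa [muInner, pow_two] using h
    have h2 : 0 ≤ (fun i => eval (ξ i) q) ⬝ᵥ Λ.mulVec (fun i => eval (ξ i) q) := by
      rcases eq_or_ne (fun i => eval (ξ i) q) 0 with h | h
      · rw [h]
        simp
      · have h' := hΛ.dotProduct_mulVec_pos h
        have h'' : 0 < (fun i => eval (ξ i) q) ⬝ᵥ Λ.mulVec (fun i => eval (ξ i) q) := by
          simpa using h'
        exact h''.le
    have h3 : 0 < nuInner μ ξ Λ q q := by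
      unfold nuInner
      linarith
    linarith [hq0]
  have hKnuG : Knu n x = G := sub_eq_zero.mp hqzero
  -- symmetry of M⁻¹ Λ
  have hMΛ : M * Λ = Λ * Mᵀ := by
    rw [hMdef, Matrix.transpose_add, Matrix.transpose_one, Matrix.transpose_mul, hKsym, hΛsym,
      Matrix.add_mul, Matrix.mul_add, Matrix.one_mul, Matrix.mul_one, Matrix.mul_assoc]
  have hMTdet : IsUnit Mᵀ.det := by rwa [Matrix.det_transpose]
  have hsymMinvΛ : (M⁻¹ * Λ)ᵀ = M⁻¹ * Λ := by
    rw [Matrix.transpose_mul, hΛsym, Matrix.transpose_nonsing_inv]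
    have hMcl : M * (Λ * Mᵀ⁻¹) = Λ := by
      rw [← Matrix.mul_assoc, hMΛ, Matrix.mul_assoc, Matrix.mul_nonsing_inv _ hMTdet,
        Matrix.mul_one]
    calc Λ * Mᵀ⁻¹ = M⁻¹ * (M * (Λ * Mᵀ⁻¹)) := by
          rw [← Matrix.mul_assoc, Matrix.nonsing_inv_mul _ hMdet, Matrix.one_mul]
      _ = M⁻¹ * Λ := by rw [hMcl]
  -- conclusion
  have hdot : vecKmat ξ Kmu n x ⬝ᵥ (M⁻¹ * Λ).mulVec (vecKmat ξ Kmu n y)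
      = a ⬝ᵥ vecKmat ξ Kmu n y := by
    rw [Matrix.dotProduct_mulVec]
    congr 1
    rw [← hsymMinvΛ, Matrix.vecMul_transpose]
  rw [hKnuG, hGeval y, hdot]
  rfl
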